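/- Canonical contraction preserves isomorphism: if G and H are coloured graphs with CWS subgraphs S₁ ⊆ G and S₂ ⊆ H respectively, and G', H' are the graphs obtained by canonically contracting S₁ and S₂ (replacing each by a single vertex coloured by the isomorphism class of the subgraph, with edges to w ∈ G\S coloured by the multiset of colour classes of S that w attaches to), then G' ≅ H' (as coloured graphs) if and only if G ≅ H via an isomorphism mapping S₁ onto S₂. -/

import Mathlib

/-- `S` is a CWS subgraph of the coloured graph `(G, θ)`: same-coloured vertices of `S`
have identical neighbour sets outside `S`. -/
def IsCWS {V C : Type*} (G : SimpleGraph V) (θ : V → C) (S : Set V) : Prop :=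
  ∀ u ∈ S, ∀ v ∈ S, θ u = θ v → ∀ w ∉ S, (G.Adj u w ↔ G.Adj v w)

/-- Vertex type obtained by contracting `S` to a single new vertex (`none`). -/
def ContractVert {V : Type*} (S : Set V) : Type _ := Option {v : V // v ∉ S}

/-- Adjacency after contracting `S`: old edges outside `S` survive, and the contracted
vertex is adjacent to `w` whenever some vertex of `S` is adjacent to `w`. -/
def contractAdj {V : Type*} (G : SimpleGraph V) (S : Set V) :
    ContractVert S → ContractVert S → Prop
  | some u, some v => G.Adj u.1 v.1
  | some u, none => ∃ x ∈ S, G.Adj x u.1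
  | none, some v => ∃ x ∈ S, G.Adj x v.1
  | none, none => False

/-- The canonical contraction of `G` along a subgraph `S`. -/
def contractGraph {V : Type*} (G : SimpleGraph V) (S : Set V) :
    SimpleGraph (ContractVert S) where
  Adj := contractAdj G S
  symm := ⟨by
    rintro (u | u) (v | v) h
    · exact h
    · exact h
    · exact h
    · exact G.adj_symm h⟩
  loopless := ⟨by
    rintro (u | u) h
    · exact h
    · exact G.irrefl h⟩

/-- Colouring of the contracted graph: a surviving vertex keeps its colour together with
the set of colour classes of `S` it attaches to (encoding the colours of contracted
edges); the contracted vertex receives the unique new colour `inr ()`, with the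
isomorphism class of the contracted subgraph recorded separately. -/
def contractColour {V C : Type*} (G : SimpleGraph V) (θ : V → C) (S : Set V) :
    ContractVert S → (C × Set C) ⊕ Unit
  | some u => Sum.inl (θ u.1, {c | ∃ x ∈ S, θ x = c ∧ G.Adj x u.1})
  | none => Sum.inr ()

/-- Canonical contraction preserves isomorphism: for coloured graphs `(G, θG)`, `(H, θH)`
with CWS subgraphs `S₁ ⊆ G`, `S₂ ⊆ H`, the contracted coloured graphs are isomorphic
(colour-preservingly, with the contracted vertex coloured by the isomorphism class of the
contracted subgraph, i.e. together with a colour-preserving isomorphism of the induced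
subgraphs on `S₁` and `S₂`) if and only if `G ≅ H` via a colour-preserving isomorphism
mapping `S₁` onto `S₂`. -/
theorem canonical_contraction_preserves_isomorphism {V W C : Type*}
    (G : SimpleGraph V) (H : SimpleGraph W) (θG : V → C) (θH : W → C)
    (S₁ : Set V) (S₂ : Set W) (h₁ : IsCWS G θG S₁) (h₂ : IsCWS H θH S₂) :
    ((∃ φ : contractGraph G S₁ ≃g contractGraph H S₂,
        ∀ x, contractColour H θH S₂ (φ x) = contractColour G θG S₁ x) ∧
      (∃ ψ : G.induce S₁ ≃g H.induce S₂, ∀ x : S₁, θH (ψ x).1 = θG x.1))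
    ↔ (∃ Φ : G ≃g H, (∀ v : V, θH (Φ v) = θG v) ∧ Φ '' S₁ = S₂) := by
  classical
  constructor
  · rintro ⟨⟨φ, hφ⟩, ⟨ψ, hψ⟩⟩
    -- φ sends the contracted vertex to the contracted vertex
    have hnone : φ none = none := by
      cases h : φ none with
      | none => rfl
      | some y =>
        have hc := hφ none
        rw [h] at hc
        simp [contractColour] at hc
    set e : {v : V // v ∉ S₁} ≃ {w : W // w ∉ S₂} := Equiv.removeNone φ.toEquiv with he
    have hsome : ∀ u : {v : V // v ∉ S₁}, φ (some u) = some (e u) := by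
      intro u
      cases h : φ (some u) with
      | none => exact absurd (φ.injective (h.trans hnone.symm)) (by simp)
      | some y =>
        have h2 : some (e u) = φ (some u) := Equiv.removeNone_some φ.toEquiv ⟨y, h⟩
        rw [← h]
        exact h2.symm
    have hcol : ∀ u : {v : V // v ∉ S₁}, θH (e u).1 = θG u.1 ∧
        ({c | ∃ y ∈ S₂, θH y = c ∧ H.Adj y (e u).1} =
          {c | ∃ x ∈ S₁, θG x = c ∧ G.Adj x u.1}) := by
      intro u
      have hc := hφ (some u)
      rw [hsome u] at hc
      simpa [contractColour, Prod.ext_iff] using hc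
    have cross : ∀ (v : V) (hv : v ∈ S₁) (u : {x : V // x ∉ S₁}),
        G.Adj v u.1 ↔ H.Adj (ψ ⟨v, hv⟩).1 (e u).1 := by
      intro v hv u
      constructor
      · intro hadj
        have hmemc : θG v ∈ {c | ∃ x ∈ S₁, θG x = c ∧ G.Adj x u.1} := ⟨v, hv, rfl, hadj⟩
        rw [← (hcol u).2] at hmemc
        obtain ⟨y, hy, hyc, hya⟩ := hmemc
        have hcψ : θH y = θH (ψ ⟨v, hv⟩).1 := by rw [hyc, hψ]
        exact (h₂ y hy _ (ψ ⟨v, hv⟩).2 hcψ _ (e u).2).mp hya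
      · intro hadj
        have hmemc : θG v ∈ {c | ∃ y ∈ S₂, θH y = c ∧ H.Adj y (e u).1} :=
          ⟨(ψ ⟨v, hv⟩).1, (ψ ⟨v, hv⟩).2, hψ _, hadj⟩
        rw [(hcol u).2] at hmemc
        obtain ⟨x, hx, hxc, hxa⟩ := hmemc
        exact (h₁ x hx v hv hxc u.1 u.2).mp hxa
    have outer : ∀ u u' : {x : V // x ∉ S₁}, G.Adj u.1 u'.1 ↔ H.Adj (e u).1 (e u').1 := by
      intro u u'
      have h3 := φ.map_rel_iff (a := some u) (b := some u')
      rw [hsome u, hsome u'] at h3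
      exact h3.symm
    set ψe : {v : V // v ∈ S₁} ≃ {w : W // w ∈ S₂} := ψ.toEquiv with hψe
    set Φe : V ≃ W :=
      (Equiv.sumCompl (· ∈ S₁)).symm.trans ((ψe.sumCongr e).trans (Equiv.sumCompl (· ∈ S₂)))
      with hΦe
    have hΦpos : ∀ (v : V) (hv : v ∈ S₁), Φe v = (ψ ⟨v, hv⟩).1 := by
      intro v hv
      simp [hΦe, Equiv.sumCompl_symm_apply_of_pos (p := (· ∈ S₁)) hv, hψe]
    have hΦneg : ∀ (v : V) (hv : v ∉ S₁), Φe v = (e ⟨v, hv⟩).1 := by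
      intro v hv
      simp [hΦe, Equiv.sumCompl_symm_apply_of_neg (p := (· ∈ S₁)) hv]
    refine ⟨⟨Φe, ?_⟩, ?_, ?_⟩
    · intro a b
      by_cases ha : a ∈ S₁ <;> by_cases hb : b ∈ S₁
      · rw [hΦpos a ha, hΦpos b hb]
        exact ψ.map_rel_iff (a := ⟨a, ha⟩) (b := ⟨b, hb⟩)
      · rw [hΦpos a ha, hΦneg b hb]
        exact (cross a ha ⟨b, hb⟩).symm
      · rw [hΦneg a ha, hΦpos b hb, G.adj_comm, H.adj_comm]
        exact (cross b hb ⟨a, ha⟩).symm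
      · rw [hΦneg a ha, hΦneg b hb]
        exact (outer ⟨a, ha⟩ ⟨b, hb⟩).symm
    · intro v
      show θH (Φe v) = θG v
      by_cases hv : v ∈ S₁
      · rw [hΦpos v hv]; exact hψ ⟨v, hv⟩
      · rw [hΦneg v hv]; exact (hcol ⟨v, hv⟩).1
    · ext w
      constructor
      · rintro ⟨v, hv, rfl⟩
        show Φe v ∈ S₂
        rw [hΦpos v hv]
        exact (ψ ⟨v, hv⟩).2
      · intro hw
        refine ⟨(ψ.symm ⟨w, hw⟩).1, (ψ.symm ⟨w, hw⟩).2, ?_⟩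
        show Φe _ = w
        rw [hΦpos _ (ψ.symm ⟨w, hw⟩).2]
        exact congrArg Subtype.val (ψ.apply_symm_apply ⟨w, hw⟩)
  · rintro ⟨Φ, hΦc, hΦS⟩
    have hmem : ∀ v, Φ v ∈ S₂ ↔ v ∈ S₁ := by
      intro v; rw [← hΦS]; exact Φ.injective.mem_set_image
    have hS2 : ∀ y, y ∈ S₂ ↔ ∃ x ∈ S₁, Φ x = y := by
      intro y; rw [← hΦS]; simp [Set.mem_image]
    constructor
    · refine ⟨⟨Equiv.optionCongr
        (Equiv.subtypeEquiv Φ.toEquiv (fun v => (not_congr (hmem v)).symm)), ?_⟩, ?_⟩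
      · rintro (u | u) (v | v)
        · exact Iff.rfl
        · show (∃ y ∈ S₂, H.Adj y (Φ v.1)) ↔ ∃ x ∈ S₁, G.Adj x v.1
          constructor
          · rintro ⟨y, hy, hadj⟩
            obtain ⟨x, hx, rfl⟩ := (hS2 y).mp hy
            exact ⟨x, hx, Φ.map_rel_iff.mp hadj⟩
          · rintro ⟨x, hx, hadj⟩
            exact ⟨Φ x, (hS2 _).mpr ⟨x, hx, rfl⟩, Φ.map_rel_iff.mpr hadj⟩
        · show (∃ y ∈ S₂, H.Adj y (Φ u.1)) ↔ ∃ x ∈ S₁, G.Adj x u.1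
          constructor
          · rintro ⟨y, hy, hadj⟩
            obtain ⟨x, hx, rfl⟩ := (hS2 y).mp hy
            exact ⟨x, hx, Φ.map_rel_iff.mp hadj⟩
          · rintro ⟨x, hx, hadj⟩
            exact ⟨Φ x, (hS2 _).mpr ⟨x, hx, rfl⟩, Φ.map_rel_iff.mpr hadj⟩
        · exact Φ.map_rel_iff
      · rintro (u | u)
        · rfl
        · show Sum.inl (θH (Φ u.1), {c | ∃ y ∈ S₂, θH y = c ∧ H.Adj y (Φ u.1)}) =
            Sum.inl (θG u.1, {c | ∃ x ∈ S₁, θG x = c ∧ G.Adj x u.1})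
          congr 1
          refine Prod.ext (hΦc u.1) ?_
          ext c
          simp only [Set.mem_setOf_eq]
          constructor
          · rintro ⟨y, hy, rfl, hadj⟩
            obtain ⟨x, hx, rfl⟩ := (hS2 y).mp hy
            exact ⟨x, hx, (hΦc x).symm, Φ.map_rel_iff.mp hadj⟩
          · rintro ⟨x, hx, rfl, hadj⟩
            exact ⟨Φ x, (hS2 _).mpr ⟨x, hx, rfl⟩, hΦc x, Φ.map_rel_iff.mpr hadj⟩
    · exact ⟨⟨Equiv.subtypeEquiv Φ.toEquiv (fun v => (hmem v).symm),
        fun {a b} => Φ.map_rel_iff⟩, fun x => hΦc x.1⟩
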